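/- X²_{α,θ} = ⋃_{k=0}^{p-1} (e^{iθ})^k K²_{α,θ}, where K²_{α,θ} is the attractor of the IFS {ψ₁(z) = α·z̄, ψ₂(z) = α e^{iθ}·z̄ + α} and X²_{α,θ} = { Σ_{n≥1} δₙ ∏_{j=1}^n ηⱼ : (δₙ) ∈ W^±_θ }. -/

import Mathlib

open Complex

/-- e^{iθ} -/
noncomputable def rot (θ : ℝ) : ℂ := Complex.exp (θ * Complex.I)

/-- The digit set Δ_θ = {0, 1, e^{iθ}, …, e^{(p-1)iθ}}. -/
def Delta (θ : ℝ) (p : ℕ) : Set ℂ := insert 0 {z | ∃ k, k < p ∧ z = rot θ ^ k}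

/-- Signed Revolving Condition: each nonzero digit equals e^{+iθ} times the previous
nonzero digit if its position j₀ is odd, and e^{-iθ} times it if j₀ is even.
Sequences are indexed from 1; index 0 is a dummy (digit 0). -/
def SRC (θ : ℝ) (δ : ℕ → ℂ) : Prop :=
  ∀ j k : ℕ, j < k → δ j ≠ 0 → δ k ≠ 0 → (∀ m, j < m → m < k → δ m = 0) →
    δ k = (if Odd j then rot θ else (rot θ)⁻¹) * δ j

/-- Membership in W^±_θ (with the convention δ 0 = 0, i.e. sequences start at index 1). -/
def Wsigned (θ : ℝ) (p : ℕ) (δ : ℕ → ℂ) : Prop :=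
  δ 0 = 0 ∧ (∀ n, δ n ∈ Delta θ p) ∧ SRC θ δ

/-- The first nonzero digit of δ is c (or δ is identically zero). -/
def FirstNonzero (δ : ℕ → ℂ) (c : ℂ) : Prop :=
  (∀ n, δ n = 0) ∨ ∃ j, δ j = c ∧ ∀ m, m < j → δ m = 0

/-- η_j = α for odd j, conj α for even j. -/
noncomputable def eta (α : ℂ) (j : ℕ) : ℂ := if Odd j then α else starRingEnd ℂ α

/-- X²₁ : points from signed revolving sequences with first nonzero digit 1. -/
noncomputable def X2one (α : ℂ) (θ : ℝ) (p : ℕ) : Set ℂ :=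
  {x | ∃ δ : ℕ → ℂ, Wsigned θ p δ ∧ FirstNonzero δ 1 ∧
    x = ∑' n, δ n * ∏ j ∈ Finset.Icc 1 n, eta α j}

/-- X²_{α,θ} : points from all signed revolving sequences. -/
noncomputable def X2full (α : ℂ) (θ : ℝ) (p : ℕ) : Set ℂ :=
  {x | ∃ δ : ℕ → ℂ, Wsigned θ p δ ∧
    x = ∑' n, δ n * ∏ j ∈ Finset.Icc 1 n, eta α j}

lemma rot_ne_zero (θ : ℝ) : rot θ ≠ 0 := Complex.exp_ne_zero _

lemma norm_rot (θ : ℝ) : ‖rot θ‖ = 1 := by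
  simp [rot, Complex.norm_exp]

lemma conj_rot (θ : ℝ) : starRingEnd ℂ (rot θ) = (rot θ)⁻¹ := by
  rw [rot, ← Complex.exp_conj, ← Complex.exp_neg]
  congr 1
  simp [Complex.conj_ofReal]

lemma rot_pow_p (θ : ℝ) (p : ℕ) (q : ℤ) (hp : 0 < p)
    (hθ : θ = 2 * Real.pi * (q : ℝ) / (p : ℝ)) : rot θ ^ p = 1 := by
  rw [rot, ← Complex.exp_nat_mul]
  have hp' : (p : ℝ) ≠ 0 := by positivity
  have : (p : ℂ) * (θ * Complex.I) = (q : ℤ) * (2 * Real.pi * Complex.I) := by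
    rw [hθ]
    have hpc : (p : ℂ) ≠ 0 := by exact_mod_cast hp'
    push_cast
    field_simp
  rw [this, Complex.exp_int_mul_two_pi_mul_I]


lemma rot_zpow_reduce (θ : ℝ) (p : ℕ) (q : ℤ) (hp : 0 < p)
    (hθ : θ = 2 * Real.pi * (q : ℝ) / (p : ℝ)) (s : ℤ) :
    ∃ k : ℕ, k < p ∧ rot θ ^ s = rot θ ^ k := by
  have hone : rot θ ^ p = 1 := rot_pow_p θ p q hp hθ
  have hpz : (0:ℤ) < (p:ℤ) := by exact_mod_cast hp
  have h0 : 0 ≤ s % (p:ℤ) := Int.emod_nonneg s (by omega)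
  have h1 : s % (p:ℤ) < p := Int.emod_lt_of_pos s hpz
  refine ⟨(s % (p:ℤ)).toNat, by omega, ?_⟩
  conv_lhs => rw [← Int.mul_ediv_add_emod s (p:ℤ)]
  rw [zpow_add₀ (rot_ne_zero θ), zpow_mul, zpow_natCast, hone,
    one_zpow, one_mul, ← Int.toNat_of_nonneg h0, zpow_natCast]
  rw [Int.toNat_natCast]

lemma rot_zpow_mem_Delta (θ : ℝ) (p : ℕ) (q : ℤ) (hp : 0 < p)
    (hθ : θ = 2 * Real.pi * (q : ℝ) / (p : ℝ)) (s : ℤ) :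
    rot θ ^ s ∈ Delta θ p := by
  obtain ⟨k, hk, he⟩ := rot_zpow_reduce θ p q hp hθ s
  exact Or.inr ⟨k, hk, he⟩

/-- norm of elements of Delta -/
lemma norm_le_one_of_mem_Delta {θ : ℝ} {p : ℕ} {z : ℂ} (h : z ∈ Delta θ p) : ‖z‖ ≤ 1 := by
  rcases h with h | ⟨k, _, rfl⟩
  · simp [h]
  · rw [norm_pow, norm_rot, one_pow]

lemma norm_eta (α : ℂ) (j : ℕ) : ‖eta α j‖ = ‖α‖ := by
  unfold _root_.eta; split <;> simp

noncomputable def Pprod (α : ℂ) (n : ℕ) : ℂ := ∏ j ∈ Finset.Icc 1 n, eta α j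

lemma norm_Pprod (α : ℂ) (n : ℕ) : ‖Pprod α n‖ = ‖α‖ ^ n := by
  rw [Pprod, norm_prod]
  simp only [norm_eta]
  rw [Finset.prod_const, Nat.card_Icc]; simp

noncomputable def psi (α : ℂ) (θ : ℝ) (b : Bool) (z : ℂ) : ℂ :=
  if b then α * rot θ * (starRingEnd ℂ z) + α else α * starRingEnd ℂ z

def eps (n : ℕ) : ℤ := if Odd n then 1 else -1

noncomputable def ssum (ω : ℕ → Bool) (n : ℕ) : ℤ :=
  ∑ m ∈ Finset.Icc 1 n, (if ω m then eps m else 0)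

noncomputable def dig (θ : ℝ) (ω : ℕ → Bool) (n : ℕ) : ℂ :=
  if n ≠ 0 ∧ ω n then rot θ ^ ssum ω (n-1) else 0

noncomputable def Gmap (α : ℂ) (θ : ℝ) (ω : ℕ → Bool) : ℕ → ℂ → ℂ
  | 0 => id
  | n+1 => fun y => Gmap α θ ω n (psi α θ (ω (n+1)) y)

lemma Pprod_succ (α : ℂ) (n : ℕ) : Pprod α (n+1) = Pprod α n * eta α (n+1) := by
  rw [Pprod, Pprod, Finset.prod_Icc_succ_top (by omega)]

lemma ssum_succ (ω : ℕ → Bool) (n : ℕ) :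
    ssum ω (n+1) = ssum ω n + (if ω (n+1) then eps (n+1) else 0) := by
  rw [ssum, ssum, Finset.sum_Icc_succ_top (by omega)]

lemma Gmap_eq (α : ℂ) (θ : ℝ) (ω : ℕ → Bool) (n : ℕ) (y : ℂ) :
    Gmap α θ ω n y = Pprod α n * rot θ ^ ssum ω n *
      (if Even n then y else starRingEnd ℂ y) + ∑ m ∈ Finset.Icc 1 n, dig θ ω m * Pprod α m := by
  induction n generalizing y with
  | zero => simp [Gmap, Pprod, ssum]
  | succ n ih =>
    have hρ := rot_ne_zero θ
    rw [show Gmap α θ ω (n+1) y = Gmap α θ ω n (psi α θ (ω (n+1)) y) from rfl, ih,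
      Finset.sum_Icc_succ_top (by omega : 1 ≤ n + 1), Pprod_succ, ssum_succ]
    have hdig : dig θ ω (n+1) = if ω (n+1) then rot θ ^ ssum ω n else 0 := by
      simp [dig]
    rw [hdig]
    rcases Nat.even_or_odd n with hn | hn
    · have hno : ¬ Odd n := Nat.not_odd_iff_even.2 hn
      have h1o : Odd (n+1) := Even.add_one hn
      have heta : eta α (n+1) = α := by simp [_root_.eta, h1o]
      have heps : eps (n+1) = 1 := by simp [eps, h1o]
      have h1e : ¬ Even (n+1) := Nat.not_even_iff_odd.2 h1o
      rw [if_pos hn, if_neg h1e, heta, heps]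
      cases hb : ω (n+1) with
      | false => simp only [hb, if_neg (Bool.false_ne_true), psi, add_zero]; ring
      | true =>
        simp only [hb, if_true, psi, zpow_add_one₀ hρ]
        ring
    · have hne : ¬ Even n := Nat.not_even_iff_odd.2 hn
      have h1e : Even (n+1) := Odd.add_one hn
      have h1o : ¬ Odd (n+1) := Nat.not_odd_iff_even.2 h1e
      have heta : eta α (n+1) = starRingEnd ℂ α := by simp [_root_.eta, h1o]
      have heps : eps (n+1) = -1 := by simp [eps, h1o]
      rw [if_neg hne, if_pos h1e, heta, heps]
      cases hb : ω (n+1) with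
      | false =>
        simp only [hb, if_neg (Bool.false_ne_true), psi, add_zero, map_mul,
          Complex.conj_conj]
        ring
      | true =>
        simp only [hb, if_true, psi, map_add, map_mul, Complex.conj_conj,
          conj_rot]
        rw [show (ssum ω n + (-1:ℤ)) = ssum ω n - 1 by ring, zpow_sub_one₀ hρ]
        ring

lemma summable_term {α : ℂ} (θ : ℝ) (p : ℕ) {δ : ℕ → ℂ} (hα : ‖α‖ < 1)
    (hδ : ∀ n, δ n ∈ Delta θ p) : Summable (fun n => δ n * Pprod α n) := by
  apply Summable.of_norm_bounded (g := fun n => ‖α‖ ^ n)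
    (summable_geometric_of_lt_one (norm_nonneg _) hα)
  intro n
  rw [norm_mul, norm_Pprod]
  calc ‖δ n‖ * ‖α‖ ^ n ≤ 1 * ‖α‖ ^ n := by
        apply mul_le_mul_of_nonneg_right (norm_le_one_of_mem_Delta (hδ n)) (by positivity)
    _ = ‖α‖ ^ n := one_mul _

lemma ssum_congr (ω : ℕ → Bool) (a : ℕ) : ∀ b, a ≤ b → (∀ m, a < m → m ≤ b → ω m = false) →
    ssum ω b = ssum ω a := by
  intro b
  induction b with
  | zero => intro h _; interval_cases a; rfl
  | succ n ih =>
    intro hab h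
    rcases Nat.eq_or_lt_of_le hab with rfl | hlt
    · rfl
    · rw [ssum_succ, h (n+1) (by omega) le_rfl]
      simp only [Bool.false_eq_true, if_false, add_zero]
      exact ih (by omega) (fun m h1 h2 => h m h1 (by omega))

lemma dig_ne_zero_iff (θ : ℝ) (ω : ℕ → Bool) (n : ℕ) :
    dig θ ω n ≠ 0 ↔ (n ≠ 0 ∧ ω n = true) := by
  unfold dig
  split_ifs with h
  · exact ⟨fun _ => h, fun _ => zpow_ne_zero _ (rot_ne_zero θ)⟩
  · exact ⟨fun hc => absurd rfl hc, fun hc => absurd hc h⟩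

lemma dig_SRC (θ : ℝ) (ω : ℕ → Bool) : SRC θ (dig θ ω) := by
  intro j k hjk hj hk hmid
  obtain ⟨hj0, hωj⟩ := (dig_ne_zero_iff θ ω j).1 hj
  obtain ⟨hk0, hωk⟩ := (dig_ne_zero_iff θ ω k).1 hk
  have hdk : dig θ ω k = rot θ ^ ssum ω (k-1) := by simp [dig, hk0, hωk]
  have hdj : dig θ ω j = rot θ ^ ssum ω (j-1) := by simp [dig, hj0, hωj]
  have hcong : ssum ω (k-1) = ssum ω j := by
    apply ssum_congr
    · omega
    · intro m h1 h2
      have := hmid m h1 (by omega)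
      by_contra hc
      exact (dig_ne_zero_iff θ ω m).2 ⟨by omega, by simpa using hc⟩ this
  have hsj : ssum ω j = ssum ω (j-1) + eps j := by
    have : j = (j-1) + 1 := by omega
    rw [this, ssum_succ]
    have : ω ((j-1)+1) = true := by rw [← this]; exact hωj
    rw [this, if_pos rfl, ← ‹j = (j-1)+1›]
  rw [hdk, hdj, hcong, hsj, zpow_add₀ (rot_ne_zero θ)]
  unfold eps
  split
  · simp [mul_comm]
  · simp [mul_comm]
lemma dig_Wsigned (θ : ℝ) (p : ℕ) (q : ℤ) (hp : 0 < p)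
    (hθ : θ = 2 * Real.pi * (q : ℝ) / (p : ℝ)) (ω : ℕ → Bool) :
    Wsigned θ p (dig θ ω) := by
  refine ⟨by simp [dig], fun n => ?_, dig_SRC θ ω⟩
  unfold dig
  split
  · exact rot_zpow_mem_Delta θ p q hp hθ _
  · exact Or.inl rfl

lemma dig_first (θ : ℝ) (ω : ℕ → Bool) : FirstNonzero (dig θ ω) 1 := by
  by_cases h : ∀ n, dig θ ω n = 0
  · exact Or.inl h
  · push_neg at h
    right
    classical
    have hex : ∃ n, dig θ ω n ≠ 0 := h
    set j := Nat.find hex with hjdef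
    have hmin : ∀ m, m < j → dig θ ω m = 0 :=
      fun m hm => Classical.not_not.1 (Nat.find_min hex hm)
    refine ⟨j, ?_, hmin⟩
    obtain ⟨hj0, hωj⟩ := (dig_ne_zero_iff θ ω _).1 (Nat.find_spec hex)
    have hs : ssum ω (j - 1) = 0 := by
      have h2 : ssum ω (j - 1) = ssum ω 0 := by
        apply ssum_congr _ 0 _ (by omega)
        intro m h1 h2
        by_contra hc
        exact (dig_ne_zero_iff θ ω m).2 ⟨by omega, by simpa using hc⟩ (hmin m (by omega))
      rw [h2]; simp [ssum]
    simp [dig, hj0, hωj, hs]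
    exact ⟨hj0, hωj⟩

lemma sum_Icc_eq_range {f : ℕ → ℂ} (hf : f 0 = 0) (n : ℕ) :
    ∑ m ∈ Finset.Icc 1 n, f m = ∑ m ∈ Finset.range (n+1), f m := by
  have h : Finset.range (n+1) = insert 0 (Finset.Icc 1 n) := by
    ext m; simp only [Finset.mem_range, Finset.mem_insert, Finset.mem_Icc]; omega
  rw [h, Finset.sum_insert (by simp), hf, zero_add]

open Filter Topology in
lemma tendsto_partial_sums {α : ℂ} (θ : ℝ) (p : ℕ) {δ : ℕ → ℂ} (hα : ‖α‖ < 1)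
    (hδ : ∀ n, δ n ∈ Delta θ p) (hδ0 : δ 0 = 0) :
    Tendsto (fun n => ∑ m ∈ Finset.Icc 1 n, δ m * Pprod α m) atTop
      (𝓝 (∑' n, δ n * Pprod α n)) := by
  have hs := (summable_term θ p hα hδ).hasSum.tendsto_sum_nat
  have h2 := hs.comp (tendsto_add_atTop_nat 1)
  convert h2 using 2 with n
  exact sum_Icc_eq_range (by simp [hδ0]) n

open Filter Topology in
lemma tendsto_Aterm {α : ℂ} (θ : ℝ) (hα : ‖α‖ < 1) (ω : ℕ → Bool) (c : ℕ → ℂ)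
    (C : ℝ) (hC : ∀ n, ‖c n‖ ≤ C) :
    Tendsto (fun n => Pprod α n * rot θ ^ ssum ω n * c n) atTop (𝓝 0) := by
  have hg : Filter.Tendsto (fun n : ℕ => ‖α‖ ^ n * C) Filter.atTop (nhds 0) := by
    have := (tendsto_pow_atTop_nhds_zero_of_lt_one (norm_nonneg α) hα).mul_const C
    simpa using this
  refine squeeze_zero_norm (fun n => ?_) hg
  rw [norm_mul, norm_mul, norm_Pprod, norm_zpow, norm_rot, one_zpow, mul_one]
  exact mul_le_mul_of_nonneg_left (hC n) (by positivity)

section KLemmas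
variable {α : ℂ} {θ : ℝ} {p : ℕ} {q : ℤ} {K : Set ℂ}

open Filter Topology

lemma psi_mem (hK : K = (fun z => α * starRingEnd ℂ z) '' K ∪
              (fun z => α * rot θ * starRingEnd ℂ z + α) '' K)
    (b : Bool) {z : ℂ} (hz : z ∈ K) : psi α θ b z ∈ K := by
  rw [hK]
  cases b
  · exact Or.inl ⟨z, hz, rfl⟩
  · exact Or.inr ⟨z, hz, rfl⟩

lemma Gmap_mem (hK : K = (fun z => α * starRingEnd ℂ z) '' K ∪
              (fun z => α * rot θ * starRingEnd ℂ z + α) '' K)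
    (ω : ℕ → Bool) (n : ℕ) {z : ℂ} (hz : z ∈ K) : Gmap α θ ω n z ∈ K := by
  induction n generalizing z with
  | zero => exact hz
  | succ n ih => exact ih (psi_mem hK (ω (n+1)) hz)

lemma tsum_dig_mem_K (hp : 0 < p) (hθ : θ = 2 * Real.pi * (q : ℝ) / (p : ℝ))
    (hα : ‖α‖ < 1) (hKne : K.Nonempty) (hKc : IsCompact K)
    (hK : K = (fun z => α * starRingEnd ℂ z) '' K ∪
              (fun z => α * rot θ * starRingEnd ℂ z + α) '' K)
    (ω : ℕ → Bool) : (∑' n, dig θ ω n * Pprod α n) ∈ K := by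
  obtain ⟨y, hy⟩ := hKne
  have hδ : ∀ n, dig θ ω n ∈ Delta θ p := (dig_Wsigned θ p q hp hθ ω).2.1
  have hB := tendsto_partial_sums θ p hα hδ (by simp [dig])
  have hA := tendsto_Aterm θ hα ω (fun n => if Even n then y else starRingEnd ℂ y) ‖y‖
    (fun n => by by_cases h : Even n <;> simp [h])
  have htend : Tendsto (fun n => Gmap α θ ω n y) atTop (𝓝 (∑' n, dig θ ω n * Pprod α n)) := by
    have := hA.add hB
    rw [zero_add] at this
    convert this using 2 with n
    exact Gmap_eq α θ ω n y
  exact hKc.isClosed.mem_of_tendsto htend (Filter.Eventually.of_forall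
    (fun n => Gmap_mem hK ω n hy))

lemma exists_code (hp : 0 < p) (hθ : θ = 2 * Real.pi * (q : ℝ) / (p : ℝ))
    (hα : ‖α‖ < 1) (hKc : IsCompact K)
    (hK : K = (fun z => α * starRingEnd ℂ z) '' K ∪
              (fun z => α * rot θ * starRingEnd ℂ z + α) '' K)
    {x : ℂ} (hx : x ∈ K) : ∃ ω : ℕ → Bool, x = ∑' n, dig θ ω n * Pprod α n := by
  classical
  have hstep : ∀ z ∈ K, ∃ b : Bool, ∃ w, w ∈ K ∧ z = psi α θ b w := by
    intro z hz
    rw [hK] at hz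
    rcases hz with ⟨w, hw, hwz⟩ | ⟨w, hw, hwz⟩
    · exact ⟨false, w, hw, hwz.symm⟩
    · exact ⟨true, w, hw, hwz.symm⟩
  choose bfn wfn hwK hweq using hstep
  let T : {z // z ∈ K} → {z // z ∈ K} := fun z => ⟨wfn z.1 z.2, hwK z.1 z.2⟩
  let t : ℕ → {z // z ∈ K} := fun n => T^[n] ⟨x, hx⟩
  let ω : ℕ → Bool := fun n => if h : n = 0 then false else bfn (t (n-1)).1 (t (n-1)).2
  have hts : ∀ n, t (n+1) = T (t n) := fun n => Function.iterate_succ_apply' T n _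
  have hstep2 : ∀ n, psi α θ (ω (n+1)) (t (n+1)).1 = (t n).1 := by
    intro n
    have hω : ω (n+1) = bfn (t n).1 (t n).2 := by simp [ω]
    rw [hω, hts n]
    exact (hweq (t n).1 (t n).2).symm
  have hGx : ∀ n, Gmap α θ ω n (t n).1 = x := by
    intro n
    induction n with
    | zero => rfl
    | succ n ih =>
      rw [show Gmap α θ ω (n+1) (t (n+1)).1
        = Gmap α θ ω n (psi α θ (ω (n+1)) (t (n+1)).1) from rfl, hstep2 n, ih]
  obtain ⟨C, hC⟩ : ∃ C, ∀ z ∈ K, ‖z‖ ≤ C := hKc.isBounded.exists_norm_le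
  have hδ : ∀ n, dig θ ω n ∈ Delta θ p := (dig_Wsigned θ p q hp hθ ω).2.1
  have hB := tendsto_partial_sums θ p hα hδ (by simp [dig])
  have hA := tendsto_Aterm θ hα ω
    (fun n => if Even n then (t n).1 else starRingEnd ℂ (t n).1) C
    (fun n => by
      have hh := hC _ (t n).2
      by_cases h : Even n <;> simpa [h] using hh)
  have htend : Tendsto (fun n => Gmap α θ ω n (t n).1) atTop
      (𝓝 (∑' n, dig θ ω n * Pprod α n)) := by
    have := hA.add hB
    rw [zero_add] at this
    convert this using 2 with n
    exact Gmap_eq α θ ω n (t n).1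
  have hconst : Tendsto (fun n => Gmap α θ ω n (t n).1) atTop (𝓝 x) := by
    simp only [hGx]
    exact tendsto_const_nhds
  exact ⟨ω, tendsto_nhds_unique hconst htend⟩

end KLemmas

lemma exists_omega_of_Wsigned {θ : ℝ} {p : ℕ} {δ : ℕ → ℂ}
    (hW : Wsigned θ p δ) (h1 : FirstNonzero δ 1) : ∃ ω : ℕ → Bool, δ = dig θ ω := by
  classical
  set ω : ℕ → Bool := fun n => decide (δ n ≠ 0) with hω
  have hωtrue : ∀ n, ω n = true ↔ δ n ≠ 0 := fun n => by simp [hω]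
  refine ⟨ω, funext fun n => ?_⟩
  induction n using Nat.strong_induction_on with
  | _ n ih =>
    by_cases hn : δ n = 0
    · have hf : ω n = false := by simp [hω, hn]
      simp [dig, hf, hn]
    · have hn0 : n ≠ 0 := fun h => hn (h ▸ hW.1)
      have hωn : ω n = true := (hωtrue n).2 hn
      rw [show dig θ ω n = rot θ ^ ssum ω (n-1) by simp [dig, hn0, hωn]]
      by_cases hprev : ∀ m, m < n → δ m = 0
      · have hs : ssum ω (n-1) = 0 := by
          apply Finset.sum_eq_zero
          intro m hm
          rw [Finset.mem_Icc] at hm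
          have : δ m = 0 := hprev m (by omega)
          simp [hω, this]
        rcases h1 with hall | ⟨j, hj1, hjz⟩
        · exact absurd (hall n) hn
        · have hjn : j = n := by
            rcases lt_trichotomy j n with h | h | h
            · exact absurd (hprev j h) (by rw [hj1]; exact one_ne_zero)
            · exact h
            · exact absurd (hjz n h) hn
          rw [hs, ← hjn, hj1, zpow_zero]
      · push_neg at hprev
        obtain ⟨m0, hm0n, hm0⟩ := hprev
        set j := Nat.findGreatest (fun m => δ m ≠ 0) (n-1) with hjdef
        have hm0le : m0 ≤ n-1 := by omega
        have hj : δ j ≠ 0 := Nat.findGreatest_spec (P := fun m => δ m ≠ 0) hm0le hm0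
        have hjle : j ≤ n-1 := Nat.findGreatest_le _
        have hjn : j < n := by omega
        have hmax : ∀ m, j < m → m < n → δ m = 0 := fun m h1' h2' =>
          Classical.not_not.1 (Nat.findGreatest_is_greatest (P := fun m => δ m ≠ 0) h1' (by omega))
        have hsrc := hW.2.2 j n hjn hj hn hmax
        have ihj := ih j hjn
        have hj0 : j ≠ 0 := fun h => hj (h ▸ hW.1)
        have hωj : ω j = true := (hωtrue j).2 hj
        have hdigj : dig θ ω j = rot θ ^ ssum ω (j-1) := by simp [dig, hj0, hωj]
        have hcong : ssum ω (n-1) = ssum ω j := by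
          apply ssum_congr _ _ _ (by omega)
          intro m h1' h2'
          simp [hω, hmax m h1' (by omega)]
        have hsj : ssum ω j = ssum ω (j-1) + eps j := by
          have hj1 : j = (j-1) + 1 := by omega
          rw [hj1, ssum_succ, ← hj1, hωj, if_pos rfl]
        rw [hsrc, ihj, hdigj, hcong, hsj, zpow_add₀ (rot_ne_zero θ)]
        unfold eps
        split
        · simp [mul_comm]
        · simp [mul_comm]

lemma Wsigned_mul {θ : ℝ} {p : ℕ} {q : ℤ} (hp : 0 < p)
    (hθ : θ = 2 * Real.pi * (q : ℝ) / (p : ℝ)) {δ : ℕ → ℂ}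
    (hW : Wsigned θ p δ) (s : ℤ) : Wsigned θ p (fun n => rot θ ^ s * δ n) := by
  have hρ := rot_ne_zero θ
  refine ⟨by simp [hW.1], fun n => ?_, ?_⟩
  · show rot θ ^ s * δ n ∈ Delta θ p
    rcases hW.2.1 n with h | ⟨m, hm, he⟩
    · rw [h, mul_zero]
      exact Or.inl rfl
    · rw [he, ← zpow_natCast (rot θ) m, ← zpow_add₀ hρ]
      exact rot_zpow_mem_Delta θ p q hp hθ _
  · intro j k hjk hj hk hmid
    have hj' : δ j ≠ 0 := fun h => hj (by simp [h])
    have hk' : δ k ≠ 0 := fun h => hk (by simp [h])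
    have hmid' : ∀ m, j < m → m < k → δ m = 0 := by
      intro m h1 h2
      have h3 : rot θ ^ s * δ m = 0 := hmid m h1 h2
      exact (mul_eq_zero.1 h3).resolve_left (zpow_ne_zero s hρ)
    have hsrc := hW.2.2 j k hjk hj' hk' hmid'
    show rot θ ^ s * δ k = _ * (rot θ ^ s * δ j)
    rw [hsrc]
    ring


/-- STATEMENT 10 X²_{α,θ} = ⋃_{k=0}^{p-1} (e^{iθ})^k K²_{α,θ}. -/
theorem X2full_eq_union_rot_attractor (α : ℂ) (θ : ℝ) (p : ℕ) (q : ℤ) (hp : 0 < p)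
    (hq : Nat.Coprime q.natAbs p)
    (hθ : θ = 2 * Real.pi * (q : ℝ) / (p : ℝ)) (hα0 : 0 < ‖α‖) (hα : ‖α‖ < 1)
    (K : Set ℂ) (hKne : K.Nonempty) (hKc : IsCompact K)
    (hK : K = (fun z => α * starRingEnd ℂ z) '' K ∪
              (fun z => α * rot θ * starRingEnd ℂ z + α) '' K) :
    X2full α θ p = ⋃ k ∈ Finset.range p, (fun z => rot θ ^ k * z) '' K := by
  classical
  have hρ := rot_ne_zero θ
  ext x
  simp only [X2full, Set.mem_setOf_eq, Set.mem_iUnion, Finset.mem_range, Set.mem_image]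
  constructor
  · rintro ⟨δ, hW, rfl⟩
    by_cases hz : ∀ n, δ n = 0
    · refine ⟨0, hp, 0, ?_, by simp [hz]⟩
      have h0 : (∑' n, dig θ (fun _ => false) n * Pprod α n) ∈ K :=
        tsum_dig_mem_K hp hθ hα hKne hKc hK _
      simpa [dig] using h0
    · push_neg at hz
      have hex : ∃ n, δ n ≠ 0 := hz
      set j := Nat.find hex with hjdef
      have hj : δ j ≠ 0 := Nat.find_spec hex
      have hmin : ∀ m, m < j → δ m = 0 := fun m hm =>
        Classical.not_not.1 (Nat.find_min hex hm)
      obtain ⟨k, hkp, hδj⟩ : ∃ k, k < p ∧ δ j = rot θ ^ k := by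
        rcases hW.2.1 j with h | h
        · exact absurd h hj
        · exact h
      set δ' : ℕ → ℂ := fun n => rot θ ^ (-(k:ℤ)) * δ n with hδ'
      have hW' : Wsigned θ p δ' := Wsigned_mul hp hθ hW (-(k:ℤ))
      have h1' : FirstNonzero δ' 1 := by
        right
        refine ⟨j, ?_, fun m hm => by simp [hδ', hmin m hm]⟩
        show rot θ ^ (-(k:ℤ)) * δ j = 1
        rw [hδj, ← zpow_natCast (rot θ) k, ← zpow_add₀ hρ]
        simp
      obtain ⟨ω, hωeq⟩ := exists_omega_of_Wsigned hW' h1'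
      have hmem : (∑' n, δ' n * Pprod α n) ∈ K := by
        rw [hωeq]
        exact tsum_dig_mem_K hp hθ hα hKne hKc hK ω
      refine ⟨k, hkp, ∑' n, δ' n * Pprod α n, hmem, ?_⟩
      have hcongr : ∀ n, δ n * ∏ i ∈ Finset.Icc 1 n, eta α i
          = rot θ ^ (k:ℤ) * (δ' n * Pprod α n) := by
        intro n
        show δ n * Pprod α n = rot θ ^ (k:ℤ) * (rot θ ^ (-(k:ℤ)) * δ n * Pprod α n)
        rw [← mul_assoc, ← mul_assoc, ← zpow_add₀ hρ]
        simp
      rw [show (∑' n, δ n * ∏ i ∈ Finset.Icc 1 n, eta α i)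
          = ∑' n, rot θ ^ (k:ℤ) * (δ' n * Pprod α n) from tsum_congr hcongr,
        tsum_mul_left, zpow_natCast]
  · rintro ⟨k, hkp, z, hzK, rfl⟩
    obtain ⟨ω, hω⟩ := exists_code hp hθ hα hKc hK hzK
    refine ⟨fun n => rot θ ^ (k:ℤ) * dig θ ω n,
      Wsigned_mul hp hθ (dig_Wsigned θ p q hp hθ ω) _, ?_⟩
    have hcongr : ∀ n, (rot θ ^ (k:ℤ) * dig θ ω n) * ∏ i ∈ Finset.Icc 1 n, eta α i
        = rot θ ^ (k:ℤ) * (dig θ ω n * Pprod α n) := by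
      intro n
      rw [Pprod, mul_assoc]
    rw [show (∑' n, (rot θ ^ (k:ℤ) * dig θ ω n) * ∏ i ∈ Finset.Icc 1 n, eta α i)
        = ∑' n, rot θ ^ (k:ℤ) * (dig θ ω n * Pprod α n) from tsum_congr hcongr,
      tsum_mul_left, ← hω, zpow_natCast]
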